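/- For every natural number Δ ≥ 1 there exists a deterministic online group coloring algorithm using at most Δ² + 2 colors. Precisely: there is a family of functions A_t : SimpleGraph (Fin (t+1)) × (Fin (t+1) → ℕ) → ℕ, defined for all t ∈ ℕ, such that for every n ≥ 1, every simple graph G on Fin n, and every group assignment γ : Fin n → ℕ satisfying (i) γ(u) = γ(v) implies u and v are not adjacent in G, and (ii) for every vertex v : Fin n, the number of groups j ≠ γ(v) for which there exist vertices u, w ≤ v with γ(u) = γ(v), γ(w) = j, and u adjacent to w in G is at most Δ, the coloring c(v) = A_v(G_v, γ_v) — where G_v is the induced subgraph of G on {0, …, v} and γ_v is the restriction of γ to {0, …, v} — is a proper coloring of G and satisfies 1 ≤ c(v) ≤ Δ² + 2 for all v. -/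
import Mathlib


/-- Groups adjacent (via revealed edges among vertices `≤ v`) to the group of `v`. -/
def NgrpAt (adj : ℕ → ℕ → Prop) (g : ℕ → ℕ) (v : ℕ) : Set ℕ :=
  {j | j ≠ g v ∧ ∃ u, u ≤ v ∧ ∃ w, w ≤ v ∧ g u = g v ∧ g w = j ∧ adj u w}

/-- Colors already used by vertices `< v` lying in groups adjacent to `v`'s group. -/
def forbSet (adj : ℕ → ℕ → Prop) (g pc : ℕ → ℕ) (v : ℕ) : Set ℕ :=
  {x | ∃ w, w < v ∧ g w ∈ NgrpAt adj g v ∧ pc w = x}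

noncomputable def chooseColor (Δ v : ℕ) (adj : ℕ → ℕ → Prop) (g pc : ℕ → ℕ) : ℕ :=
  sInf ({x | 1 ≤ x ∧ x ≤ Δ^2+1} \ forbSet adj g pc v)

def seenV (g : ℕ → ℕ) (v : ℕ) : Prop := ∃ k, k < v ∧ g k = g v

noncomputable def lsV (g : ℕ → ℕ) (v : ℕ) : ℕ := sSup {k | k < v ∧ g k = g v}

def keepOKV (adj : ℕ → ℕ → Prop) (g pc : ℕ → ℕ) (v : ℕ) : Prop :=
  ∀ u, u < v → adj u v → pc u ≠ pc (lsV g v)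

def isolV (adj : ℕ → ℕ → Prop) (v : ℕ) : Prop := ∀ u, u < v → ¬ adj u v

open scoped Classical in
noncomputable def rule (Δ v : ℕ) (adj : ℕ → ℕ → Prop) (g pc : ℕ → ℕ) : ℕ :=
  if seenV g v then
    (if keepOKV adj g pc v then pc (lsV g v) else chooseColor Δ v adj g pc)
  else if isolV adj v then Δ^2+2 else chooseColor Δ v adj g pc

noncomputable def col (Δ : ℕ) : (t : ℕ) → SimpleGraph (Fin (t + 1)) → (Fin (t + 1) → ℕ) → ℕ
  | t, H, g => rule Δ t
      (fun a b => ∃ (ha : a < t+1) (hb : b < t+1), H.Adj ⟨a, ha⟩ ⟨b, hb⟩)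
      (fun a => if ha : a < t+1 then g ⟨a, ha⟩ else 0)
      (fun k => if hk : k < t then
          col Δ k (H.comap (Fin.castLE (by omega))) (fun i => g (Fin.castLE (by omega) i))
        else 0)
termination_by t => t

lemma col_eq (Δ t H g) : col Δ t H g = rule Δ t
      (fun a b => ∃ (ha : a < t+1) (hb : b < t+1), H.Adj ⟨a, ha⟩ ⟨b, hb⟩)
      (fun a => if ha : a < t+1 then g ⟨a, ha⟩ else 0)
      (fun k => if hk : k < t then
          col Δ k (H.comap (Fin.castLE (by omega))) (fun i => g (Fin.castLE (by omega) i))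
        else 0) := by
  rw [col]

lemma rule_congr (Δ v : ℕ) (adj adj' : ℕ → ℕ → Prop) (g g' pc pc' : ℕ → ℕ)
    (hadj : ∀ a b, a ≤ v → b ≤ v → (adj a b ↔ adj' a b))
    (hg : ∀ a, a ≤ v → g a = g' a) (hpc : ∀ k, k < v → pc k = pc' k) :
    rule Δ v adj g pc = rule Δ v adj' g' pc' := by
  have hsls : {k | k < v ∧ g k = g v} = {k | k < v ∧ g' k = g' v} := by
    ext k; simp only [Set.mem_setOf_eq]
    exact and_congr_right fun hk => by rw [hg k hk.le, hg v le_rfl]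
  have hls : lsV g v = lsV g' v := by unfold lsV; rw [hsls]
  have hseen : seenV g v ↔ seenV g' v := by
    unfold seenV
    constructor
    · rintro ⟨k, hk, he⟩; exact ⟨k, hk, by rw [← hg k hk.le, ← hg v le_rfl]; exact he⟩
    · rintro ⟨k, hk, he⟩; exact ⟨k, hk, by rw [hg k hk.le, hg v le_rfl]; exact he⟩
  have hN : NgrpAt adj g v = NgrpAt adj' g' v := by
    unfold NgrpAt
    ext j; simp only [Set.mem_setOf_eq]
    constructor
    · rintro ⟨hj, u, hu, w, hw, h1, h2, h3⟩
      exact ⟨by rwa [← hg v le_rfl], u, hu, w, hw,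
        by rw [← hg u hu, ← hg v le_rfl]; exact h1, by rw [← hg w hw]; exact h2,
        (hadj u w hu hw).1 h3⟩
    · rintro ⟨hj, u, hu, w, hw, h1, h2, h3⟩
      exact ⟨by rwa [hg v le_rfl], u, hu, w, hw,
        by rw [hg u hu, hg v le_rfl]; exact h1, by rw [hg w hw]; exact h2,
        (hadj u w hu hw).2 h3⟩
  have hforb : forbSet adj g pc v = forbSet adj' g' pc' v := by
    unfold forbSet
    ext x; simp only [Set.mem_setOf_eq]
    constructor
    · rintro ⟨w, hw, hmem, hx⟩
      exact ⟨w, hw, by rw [← hg w hw.le, ← hN]; exact hmem, by rw [← hpc w hw]; exact hx⟩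
    · rintro ⟨w, hw, hmem, hx⟩
      exact ⟨w, hw, by rw [hg w hw.le, hN]; exact hmem, by rw [hpc w hw]; exact hx⟩
  have hch : chooseColor Δ v adj g pc = chooseColor Δ v adj' g' pc' := by
    unfold chooseColor; rw [hforb]
  have hkeep : keepOKV adj g pc v ↔ keepOKV adj' g' pc' v := by
    unfold keepOKV
    have hlsv : lsV g v < v ∨ ¬ seenV g v := by
      by_cases hs : seenV g v
      · left
        have : lsV g v ∈ {k | k < v ∧ g k = g v} :=
          Nat.sSup_mem hs ⟨v, fun k hk => hk.1.le⟩
        exact this.1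
      · right; exact hs
    have hlt : v = 0 ∨ lsV g v < v := by
      rcases Nat.eq_zero_or_pos v with h0 | h0
      · exact Or.inl h0
      · right
        by_cases hs : seenV g v
        · exact (Nat.sSup_mem hs ⟨v, fun k hk => hk.1.le⟩).1
        · have : {k | k < v ∧ g k = g v} = ∅ := by
            ext k; simp only [Set.mem_setOf_eq, Set.mem_empty_iff_false, iff_false]
            rintro ⟨h1, h2⟩; exact hs ⟨k, h1, h2⟩
          unfold lsV; rw [this]; simpa using h0
    rcases hlt with h0 | hl
    · subst h0; constructor <;> (intro _ u hu; omega)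
    · have hpcls : pc (lsV g v) = pc' (lsV g' v) := by rw [← hls, hpc _ hl]
      constructor
      · intro h u hu ha'
        rw [← hpc u hu, ← hpcls]; exact h u hu ((hadj u v hu.le le_rfl).2 ha')
      · intro h u hu ha'
        rw [hpc u hu, hpcls]; exact h u hu ((hadj u v hu.le le_rfl).1 ha')
  unfold rule
  by_cases hs : seenV g v
  · rw [if_pos hs, if_pos ((hseen).1 hs)]
    by_cases hk : keepOKV adj g pc v
    · rw [if_pos hk, if_pos (hkeep.1 hk), ← hls]
      rcases Nat.eq_zero_or_pos v with h0 | h0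
      · subst h0
        exfalso; obtain ⟨k, hk0, _⟩ := hs; omega
      · by_cases hsv : seenV g v
        · exact hpc _ (Nat.sSup_mem hsv ⟨v, fun k hk' => hk'.1.le⟩).1
        · exact absurd hs hsv
    · rw [if_neg hk, if_neg (fun h => hk (hkeep.2 h))]; exact hch
  · rw [if_neg hs, if_neg (fun h => hs (hseen.2 h))]
    have hiso : isolV adj v ↔ isolV adj' v := by
      unfold isolV
      exact forall_congr' fun u => imp_congr_right fun hu =>
        not_congr (hadj u v hu.le le_rfl)
    by_cases hi : isolV adj v
    · rw [if_pos hi, if_pos (hiso.1 hi)]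
    · rw [if_neg hi, if_neg (fun h => hi (hiso.2 h))]; exact hch

section Core

variable {Δ n : ℕ} {adj : ℕ → ℕ → Prop} {g c : ℕ → ℕ}

/-- vertex `v` adopts a (possibly new) color, rather than keeping the group's color. -/
def adopterV (adj : ℕ → ℕ → Prop) (g c : ℕ → ℕ) (v : ℕ) : Prop :=
  ¬ (seenV g v ∧ keepOKV adj g c v)

/-- vertex `v` takes the `chooseColor` branch. -/
def chooseBr (adj : ℕ → ℕ → Prop) (g c : ℕ → ℕ) (v : ℕ) : Prop :=
  (seenV g v ∧ ¬ keepOKV adj g c v) ∨ (¬ seenV g v ∧ ¬ isolV adj v)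

def NEat (Δ : ℕ) (adj : ℕ → ℕ → Prop) (g c : ℕ → ℕ) (v : ℕ) : Prop :=
  ({x | 1 ≤ x ∧ x ≤ Δ^2+1} \ forbSet adj g c v).Nonempty

variable (hsym : ∀ a b, adj a b → adj b a)
variable (hind : ∀ a b, g a = g b → ¬ adj a b)
variable (hdeg : ∀ v, v < n → (NgrpAt adj g v).ncard ≤ Δ)
variable (hadjlt : ∀ a b, adj a b → a < n ∧ b < n)
variable (hrec : ∀ v, v < n → c v = rule Δ v adj g c)

lemma ls_lt (hs : seenV g v) : lsV g v < v ∧ g (lsV g v) = g v :=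
  Nat.sSup_mem hs ⟨v, fun k hk => hk.1.le⟩

lemma ls_ge {k v : ℕ} (hk : k < v) (hg : g k = g v) : k ≤ lsV g v :=
  le_csSup ⟨v, fun k' hk' => hk'.1.le⟩ ⟨hk, hg⟩

include hrec in
lemma rec_keep {v : ℕ} (hv : v < n) (hs : seenV g v) (hk : keepOKV adj g c v) :
    c v = c (lsV g v) := by
  rw [hrec v hv]; unfold rule; rw [if_pos hs, if_pos hk]

include hrec in
lemma rec_choose {v : ℕ} (hv : v < n) (hb : chooseBr adj g c v) :
    c v = chooseColor Δ v adj g c := by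
  rw [hrec v hv]; unfold rule
  rcases hb with ⟨hs, hk⟩ | ⟨hs, hi⟩
  · rw [if_pos hs, if_neg hk]
  · rw [if_neg hs, if_neg hi]

include hrec in
lemma rec_s {v : ℕ} (hv : v < n) (hs : ¬ seenV g v) (hi : isolV adj v) :
    c v = Δ^2+2 := by
  rw [hrec v hv]; unfold rule; rw [if_neg hs, if_pos hi]

lemma choose_spec {v : ℕ} (hne : NEat Δ adj g c v) :
    (1 ≤ chooseColor Δ v adj g c ∧ chooseColor Δ v adj g c ≤ Δ^2+1) ∧
      chooseColor Δ v adj g c ∉ forbSet adj g c v := by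
  have := Nat.sInf_mem hne
  exact ⟨⟨this.1.1, this.1.2⟩, this.2⟩

/-- Chain lemma: every vertex's color was adopted by the last adopter of its group. -/
lemma chain (hrec : ∀ v, v < n → c v = rule Δ v adj g c) :
    ∀ v, v < n → ∃ a, a ≤ v ∧ g a = g v ∧ c a = c v ∧ adopterV adj g c a ∧
      ∀ b, a < b → b ≤ v → g b = g v → ¬ adopterV adj g c b := by
  intro v
  induction v using Nat.strong_induction_on with
  | _ v ih =>
    intro hv
    by_cases ha : adopterV adj g c v
    · exact ⟨v, le_rfl, rfl, rfl, ha, fun b h1 h2 _ _ => absurd h1 (by omega)⟩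
    · rw [adopterV, not_not] at ha
      obtain ⟨hs, hk⟩ := ha
      obtain ⟨hlt, hgl⟩ := ls_lt (g := g) hs
      obtain ⟨a, h1, h2, h3, h4, h5⟩ := ih (lsV g v) hlt (hlt.trans hv)
      refine ⟨a, h1.trans hlt.le, by rw [h2, hgl], ?_, h4, ?_⟩
      · rw [h3, ← rec_keep hrec hv hs hk]
      · intro b hab hbv hgb
        rcases eq_or_lt_of_le hbv with rfl | hblt
        · rw [adopterV, not_not]; exact ⟨hs, hk⟩
        · exact h5 b hab (ls_ge hblt hgb) (by rw [hgb, ← hgl])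

lemma Ngrp_mono {a b : ℕ} (hab : a ≤ b) (hg : g a = g b) :
    NgrpAt adj g a ⊆ NgrpAt adj g b := by
  rintro j ⟨hj, u, hu, w, hw, h1, h2, h3⟩
  exact ⟨by rwa [← hg], u, hu.trans hab, w, hw.trans hab, by rw [← hg]; exact h1, h2, h3⟩

lemma Ngrp_finite (v : ℕ) : (NgrpAt adj g v).Finite := by
  apply Set.Finite.subset ((Set.finite_Iic v).image g)
  rintro j ⟨hj, u, hu, w, hw, h1, h2, h3⟩
  exact ⟨w, hw, h2⟩

lemma forb_finite (v : ℕ) : (forbSet adj g c v).Finite := by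
  apply Set.Finite.subset ((Set.finite_Iio v).image c)
  rintro x ⟨w, hw, _, hx⟩
  exact ⟨w, hw, hx⟩

include hsym hind hrec in
/-- Cross lemma: adopters avoid colors of groups already adjacent at adoption time. -/
lemma cross {V : ℕ} (hV : V ≤ n) (hNE : ∀ w, w < V → NEat Δ adj g c w)
    {a b : ℕ} (hab : a < b) (hbV : b < V) (hgab : g a ≠ g b)
    (hadopt : adopterV adj g c b)
    (hwit : ∃ u, u ≤ b ∧ ∃ w, w ≤ b ∧ g u = g b ∧ g w = g a ∧ adj u w) :
    c a ≠ c b := by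
  obtain ⟨u, hu, w, hw, hgu, hgw, hadj⟩ := hwit
  have hbn : b < n := lt_of_lt_of_le hbV hV
  -- b takes the choose branch
  have hbr : chooseBr adj g c b := by
    by_cases hs : seenV g b
    · exact Or.inl ⟨hs, fun hk => hadopt ⟨hs, hk⟩⟩
    · refine Or.inr ⟨hs, ?_⟩
      -- u = b is forced, and w < b, adj w b
      have hub : u = b := by
        rcases eq_or_lt_of_le hu with h | h
        · exact h
        · exact absurd ⟨u, h, hgu⟩ hs
      have hwb : w < b := by
        rcases eq_or_lt_of_le hw with h | h
        · exfalso; exact hgab (by rw [← hgw, h])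
        · exact h
      intro hiso
      exact hiso w hwb (hsym _ _ (by rwa [hub] at hadj))
  have hcb : c b = chooseColor Δ b adj g c := rec_choose hrec hbn hbr
  have hnotin := (choose_spec (hNE b hbV)).2
  intro hceq
  apply hnotin
  rw [← hcb, ← hceq]
  exact ⟨a, hab, ⟨hgab, u, hu, w, hw, hgu, hgw, hadj⟩, rfl⟩

include hsym hind hrec in
/-- Blame lemma: each choose-event can be blamed on a group newly adjacent since the
previous adoption in its group. -/
lemma blameEx {V : ℕ} (hV : V ≤ n) (hNE : ∀ w, w < V → NEat Δ adj g c w)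
    {a : ℕ} (haV : a < V) (hbr : chooseBr adj g c a) :
    ∃ jb, jb ∈ NgrpAt adj g a ∧
      ∀ a0, a0 < a → g a0 = g a → adopterV adj g c a0 → jb ∉ NgrpAt adj g a0 := by
  have han : a < n := lt_of_lt_of_le haV hV
  rcases hbr with ⟨hs, hk⟩ | ⟨hs, hi⟩
  · -- conflict case
    rw [keepOKV] at hk
    push_neg at hk
    obtain ⟨u, hua, hadj, hcu⟩ := hk
    have hgua : g u ≠ g a := fun h => hind u a h hadj
    refine ⟨g u, ⟨hgua, a, le_rfl, u, hua.le, rfl, rfl, hsym _ _ hadj⟩, ?_⟩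
    -- previous adopter of the group of a
    obtain ⟨hlt, hgl⟩ := ls_lt (g := g) hs
    obtain ⟨pa, hpa1, hpa2, hpa3, hpa4, hpa5⟩ := chain hrec (lsV g a) (hlt.trans han)
    -- first: g u ∉ NgrpAt pa
    have hnotpa : g u ∉ NgrpAt adj g pa := by
      rintro ⟨hne', u', hu', w', hw', hgu', hgw', hadj'⟩
      obtain ⟨b, hb1, hb2, hb3, hb4, _⟩ := chain hrec u (hua.trans han)
      have hcbpa : c b = c pa := by rw [hb3, hcu, ← hpa3]
      have hgbpa : g b ≠ g pa := by rw [hb2, hpa2, hgl]; exact hgua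
      have hbpa : b ≠ pa := fun h => hgbpa (by rw [h])
      have hpaV : pa < V := by omega
      have hbV' : b < V := by omega
      rcases lt_or_gt_of_ne hbpa with h | h
      · exact cross hsym hind hrec hV hNE h hpaV hgbpa hpa4
          ⟨u', hu', w', hw', hgu', by rw [hgw', hb2], hadj'⟩ hcbpa
      · exact cross hsym hind hrec hV hNE h hbV' hgbpa.symm hb4
          ⟨w', hw'.trans h.le, u', hu'.trans h.le, by rw [hgw', hb2],
            hgu', hsym _ _ hadj'⟩ hcbpa.symm
    intro a0 ha0 hga0 hada0
    have ha0ls : a0 ≤ lsV g a := ls_ge ha0 hga0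
    have ha0pa : a0 ≤ pa := by
      by_contra h
      exact hpa5 a0 (by omega) ha0ls (by rw [hga0, ← hgl]) hada0
    exact fun hmem => hnotpa (Ngrp_mono ha0pa (by rw [hga0, hpa2, hgl]) hmem)
  · -- first vertex of its group, with a back-neighbor
    rw [isolV] at hi
    push_neg at hi
    obtain ⟨u, hua, hadj⟩ := hi
    have hgua : g u ≠ g a := fun h => hind u a h hadj
    refine ⟨g u, ⟨hgua, a, le_rfl, u, hua.le, rfl, rfl, hsym _ _ hadj⟩, ?_⟩
    intro a0 ha0 hga0 _
    exact absurd ⟨a0, ha0, hga0⟩ hs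

include hsym hind hdeg hrec in
/-- Each group uses at most `Δ` colors besides the reserved color `Δ²+2`. -/
lemma group_count {V : ℕ} (hV : V ≤ n) (hNE : ∀ w, w < V → NEat Δ adj g c w)
    (j v : ℕ) (hvV : v ≤ V) :
    {x | x ≠ Δ^2+2 ∧ ∃ w, w < v ∧ g w = j ∧ c w = x}.ncard ≤ Δ := by
  classical
  set S : Set ℕ := {a | a < v ∧ g a = j ∧ chooseBr adj g c a} with hS
  have hSfin : S.Finite := (Set.finite_Iio v).subset (fun a ha => ha.1)
  -- the target set is contained in the image of S under c
  have hTsub : {x | x ≠ Δ^2+2 ∧ ∃ w, w < v ∧ g w = j ∧ c w = x} ⊆ c '' S := by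
    rintro x ⟨hxs, w, hw, hgw, hcw⟩
    have hwn : w < n := by omega
    obtain ⟨a, ha1, ha2, ha3, ha4, _⟩ := chain hrec w hwn
    have han : a < n := by omega
    have habr : chooseBr adj g c a := by
      rw [adopterV] at ha4
      by_cases hs : seenV g a
      · exact Or.inl ⟨hs, fun hk => ha4 ⟨hs, hk⟩⟩
      · by_cases hi : isolV adj a
        · exfalso; apply hxs
          rw [← hcw, ← ha3]
          exact rec_s hrec han hs hi
        · exact Or.inr ⟨hs, hi⟩
    exact ⟨a, ⟨by omega, by rw [ha2, hgw], habr⟩, by rw [ha3, hcw]⟩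
  rcases Set.eq_empty_or_nonempty S with hSe | hSne
  · have : {x | x ≠ Δ^2+2 ∧ ∃ w, w < v ∧ g w = j ∧ c w = x} = ∅ := by
      rw [← Set.subset_empty_iff]
      intro x hx
      have := hTsub hx
      rw [hSe] at this
      simpa using this
    rw [this]; simp
  · -- the maximal element of S
    set A := sSup S with hA
    have hAS : A ∈ S := Nat.sSup_mem hSne ⟨v, fun a ha => ha.1.le⟩
    have hAub : ∀ a ∈ S, a ≤ A := fun a ha => le_csSup ⟨v, fun a' ha' => ha'.1.le⟩ ha
    -- blame map
    have hblame : ∀ a, ∃ jb, a ∈ S → jb ∈ NgrpAt adj g a ∧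
        ∀ a0, a0 < a → g a0 = g a → adopterV adj g c a0 → jb ∉ NgrpAt adj g a0 := by
      intro a
      by_cases ha : a ∈ S
      · obtain ⟨jb, h1, h2⟩ := blameEx hsym hind hrec hV hNE
          (lt_of_lt_of_le (lt_of_lt_of_le ha.1 hvV) le_rfl) ha.2.2
        exact ⟨jb, fun _ => ⟨h1, h2⟩⟩
      · exact ⟨0, fun h => absurd h ha⟩
    choose f hf using hblame
    have hadoptS : ∀ a ∈ S, adopterV adj g c a := by
      rintro a ⟨_, _, hbr⟩
      rcases hbr with ⟨_, hk⟩ | ⟨hs, _⟩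
      · exact fun h => hk h.2
      · exact fun h => hs h.1
    have hinj : Set.InjOn f S := by
      intro a ha a' ha' heq
      by_contra hne
      rcases lt_or_gt_of_ne hne with h | h
      · exact (hf a' ha').2 a h (by rw [ha.2.1, ha'.2.1]) (hadoptS a ha)
          (heq ▸ (hf a ha).1)
      · exact (hf a ha).2 a' h (by rw [ha.2.1, ha'.2.1]) (hadoptS a' ha')
          (heq ▸ (hf a' ha').1)
    have hmaps : ∀ a ∈ S, f a ∈ NgrpAt adj g A := by
      intro a ha
      exact Ngrp_mono (hAub a ha) (by rw [ha.2.1, hAS.2.1]) ((hf a ha).1)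
    calc {x | x ≠ Δ^2+2 ∧ ∃ w, w < v ∧ g w = j ∧ c w = x}.ncard
        ≤ (c '' S).ncard := Set.ncard_le_ncard hTsub (hSfin.image c)
      _ ≤ S.ncard := Set.ncard_image_le hSfin
      _ ≤ (NgrpAt adj g A).ncard :=
          Set.ncard_le_ncard_of_injOn f hmaps hinj (Ngrp_finite A)
      _ ≤ Δ := hdeg A (by have := hAS.1; omega)

include hsym hind hdeg hrec in
lemma NE_all : ∀ v, v < n → NEat Δ adj g c v := by
  intro v
  induction v using Nat.strong_induction_on with
  | _ v ih =>
    intro hv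
    classical
    have hNE : ∀ w, w < v → NEat Δ adj g c w := fun w hw => ih w hw (by omega)
    have hNfin := Ngrp_finite (adj := adj) (g := g) v
    set N : Finset ℕ := hNfin.toFinset with hN
    have hT : ∀ j : ℕ, {x | x ≠ Δ^2+2 ∧ ∃ w, w < v ∧ g w = j ∧ c w = x}.Finite := by
      intro j
      apply Set.Finite.subset ((Set.finite_Iio v).image c)
      rintro x ⟨_, w, hw, _, hcw⟩
      exact ⟨w, hw, hcw⟩
    have hsub : {x | 1 ≤ x ∧ x ≤ Δ^2+1} ∩ forbSet adj g c v ⊆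
        ↑(N.biUnion fun j => (hT j).toFinset) := by
      rintro x ⟨hx1, w, hw, hmem, hcw⟩
      simp only [Finset.coe_biUnion, Set.mem_iUnion, Finset.mem_coe,
        Set.Finite.mem_toFinset, Finset.mem_biUnion]
      have hx1' : 1 ≤ x ∧ x ≤ Δ^2+1 := hx1
      refine ⟨g w, hNfin.mem_toFinset.2 hmem, ⟨by omega, w, hw, rfl, hcw⟩⟩
    have hcard : ({x | 1 ≤ x ∧ x ≤ Δ^2+1} ∩ forbSet adj g c v).ncard ≤ Δ * Δ := by
      calc ({x | 1 ≤ x ∧ x ≤ Δ^2+1} ∩ forbSet adj g c v).ncard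
          ≤ (↑(N.biUnion fun j => (hT j).toFinset) : Set ℕ).ncard :=
            Set.ncard_le_ncard hsub (N.biUnion fun j => (hT j).toFinset).finite_toSet
        _ = (N.biUnion fun j => (hT j).toFinset).card := Set.ncard_coe_finset _
        _ ≤ ∑ j ∈ N, ((hT j).toFinset).card := Finset.card_biUnion_le
        _ ≤ N.card * Δ := by
            rw [← smul_eq_mul]
            apply Finset.sum_le_card_nsmul
            intro j hj
            rw [← Set.ncard_eq_toFinset_card _ (hT j)]
            exact group_count hsym hind hdeg hrec (le_of_lt hv) hNE j v le_rfl
        _ ≤ Δ * Δ := by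
            have : N.card ≤ Δ := by
              rw [hN, ← Set.ncard_eq_toFinset_card _ hNfin]
              exact hdeg v hv
            exact Nat.mul_le_mul_right Δ this
    rw [NEat]
    by_contra hempty
    rw [Set.not_nonempty_iff_eq_empty, Set.diff_eq_empty] at hempty
    have hle : {x : ℕ | 1 ≤ x ∧ x ≤ Δ^2+1}.ncard ≤ Δ * Δ := by
      refine le_trans (Set.ncard_le_ncard (fun x hx => Set.mem_inter hx (hempty hx)) ?_) hcard
      exact Set.Finite.subset (forb_finite v) (Set.inter_subset_right)
    have heq : {x : ℕ | 1 ≤ x ∧ x ≤ Δ^2+1} = ↑(Finset.Icc 1 (Δ^2+1)) := by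
      ext x; simp [Finset.mem_Icc]
    rw [heq, Set.ncard_coe_finset, Nat.card_Icc] at hle
    have : Δ^2 = Δ * Δ := pow_two Δ
    omega

include hsym hind hdeg hrec in
lemma proper_lt : ∀ a b, a < b → b < n → adj a b → c a ≠ c b := by
  intro a b hab hbn hadj
  have hgab : g a ≠ g b := fun h => hind a b h hadj
  by_cases hs : seenV g b
  · by_cases hk : keepOKV adj g c b
    · rw [rec_keep hrec hbn hs hk]
      exact hk a hab hadj
    · have := rec_choose hrec hbn (Or.inl ⟨hs, hk⟩)
      intro hceq
      apply (choose_spec (NE_all hsym hind hdeg hrec b hbn)).2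
      rw [← this, ← hceq]
      exact ⟨a, hab, ⟨hgab, b, le_rfl, a, hab.le, rfl, rfl, hsym _ _ hadj⟩, rfl⟩
  · by_cases hi : isolV adj b
    · exact absurd hadj (hi a hab)
    · have := rec_choose hrec hbn (Or.inr ⟨hs, hi⟩)
      intro hceq
      apply (choose_spec (NE_all hsym hind hdeg hrec b hbn)).2
      rw [← this, ← hceq]
      exact ⟨a, hab, ⟨hgab, b, le_rfl, a, hab.le, rfl, rfl, hsym _ _ hadj⟩, rfl⟩

include hsym hind hdeg hrec in
lemma bounds_all : ∀ v, v < n → 1 ≤ c v ∧ c v ≤ Δ^2+2 := by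
  intro v
  induction v using Nat.strong_induction_on with
  | _ v ih =>
    intro hv
    by_cases hs : seenV g v
    · by_cases hk : keepOKV adj g c v
      · rw [rec_keep hrec hv hs hk]
        exact ih _ (ls_lt hs).1 (lt_trans (ls_lt (g := g) hs).1 hv)
      · rw [rec_choose hrec hv (Or.inl ⟨hs, hk⟩)]
        have := (choose_spec (NE_all hsym hind hdeg hrec v hv)).1
        omega
    · by_cases hi : isolV adj v
      · rw [rec_s hrec hv hs hi]; omega
      · rw [rec_choose hrec hv (Or.inr ⟨hs, hi⟩)]
        have := (choose_spec (NE_all hsym hind hdeg hrec v hv)).1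
        omega

end Core

/-- The color that the online group coloring algorithm `A` assigns to vertex `v` of `G`
with group assignment `γ`: `A` sees the induced subgraph of `G` on `{0, …, v}` together
with the groups of the vertices `0, …, v`. -/
def groupColoring {n : ℕ} (A : (t : ℕ) → SimpleGraph (Fin (t + 1)) × (Fin (t + 1) → ℕ) → ℕ)
    (G : SimpleGraph (Fin n)) (γ : Fin n → ℕ) (v : Fin n) : ℕ :=
  A v.1 (G.comap (Fin.castLE v.isLt), γ ∘ Fin.castLE v.isLt)

/-- There is a deterministic online group coloring algorithm using at most `Δ² + 2`
colors: whenever the arriving vertex's group has at most `Δ` neighboring groups in the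
current neighbor graph, the produced coloring is proper and uses colors in `[1, Δ² + 2]`. -/
theorem online_group_coloring (Δ : ℕ) (hΔ : 1 ≤ Δ) :
    ∃ A : (t : ℕ) → SimpleGraph (Fin (t + 1)) × (Fin (t + 1) → ℕ) → ℕ,
      ∀ (n : ℕ), 1 ≤ n → ∀ (G : SimpleGraph (Fin n)) (γ : Fin n → ℕ),
        (∀ u v : Fin n, γ u = γ v → ¬ G.Adj u v) →
        (∀ v : Fin n,
          {j : ℕ | j ≠ γ v ∧ ∃ u w : Fin n, u ≤ v ∧ w ≤ v ∧
            γ u = γ v ∧ γ w = j ∧ G.Adj u w}.ncard ≤ Δ) →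
        (∀ u v : Fin n, G.Adj u v → groupColoring A G γ u ≠ groupColoring A G γ v) ∧
        (∀ v : Fin n, 1 ≤ groupColoring A G γ v ∧ groupColoring A G γ v ≤ Δ ^ 2 + 2) := by
  classical
  refine ⟨fun t p => col Δ t p.1 p.2, ?_⟩
  intro n hn G γ hIndep hDeg
  set A : (t : ℕ) → SimpleGraph (Fin (t + 1)) × (Fin (t + 1) → ℕ) → ℕ :=
    fun t p => col Δ t p.1 p.2 with hA
  set adjN : ℕ → ℕ → Prop :=
    fun a b => ∃ (ha : a < n) (hb : b < n), G.Adj ⟨a, ha⟩ ⟨b, hb⟩ with hadjN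
  set gN : ℕ → ℕ := fun a => if ha : a < n then γ ⟨a, ha⟩ else 0 with hgN
  set cN : ℕ → ℕ :=
    fun k => if hk : k < n then groupColoring A G γ ⟨k, hk⟩ else 0 with hcN
  have hsym : ∀ a b, adjN a b → adjN b a := by
    rintro a b ⟨ha, hb, h⟩; exact ⟨hb, ha, h.symm⟩
  have hind : ∀ a b, gN a = gN b → ¬ adjN a b := by
    rintro a b hg ⟨ha, hb, h⟩
    rw [hgN] at hg
    simp only [dif_pos ha, dif_pos hb] at hg
    exact hIndep _ _ hg h
  have hdeg : ∀ v, v < n → (NgrpAt adjN gN v).ncard ≤ Δ := by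
    intro v hv
    have hset : NgrpAt adjN gN v =
        {j : ℕ | j ≠ γ ⟨v, hv⟩ ∧ ∃ u w : Fin n, u ≤ ⟨v, hv⟩ ∧ w ≤ ⟨v, hv⟩ ∧
          γ u = γ ⟨v, hv⟩ ∧ γ w = j ∧ G.Adj u w} := by
      ext j
      constructor
      · rintro ⟨hj, u, hu, w, hw, h1, h2, ha, hb, h3⟩
        rw [hgN] at hj h1 h2
        simp only [dif_pos ha, dif_pos hb, dif_pos hv] at hj h1 h2
        exact ⟨hj, ⟨u, ha⟩, ⟨w, hb⟩, hu, hw, h1, h2, h3⟩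
      · rintro ⟨hj, u, w, hu, hw, h1, h2, h3⟩
        refine ⟨?_, u.1, hu, w.1, hw, ?_, ?_, u.isLt, w.isLt, by simpa using h3⟩
        all_goals rw [hgN]; simp only [dif_pos u.isLt, dif_pos w.isLt, dif_pos hv]
        · simpa using hj
        · simpa using h1
        · simpa using h2
    rw [hset]
    exact hDeg ⟨v, hv⟩
  have hrec : ∀ v, v < n → cN v = rule Δ v adjN gN cN := by
    intro v hv
    have h1 : cN v = col Δ v (G.comap (Fin.castLE hv)) (γ ∘ Fin.castLE hv) := by
      rw [hcN]; simp only [dif_pos hv]; rfl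
    rw [h1, col_eq]
    apply rule_congr
    · intro a b hav hbv
      constructor
      · rintro ⟨ha, hb, h⟩
        exact ⟨by omega, by omega, h⟩
      · rintro ⟨ha, hb, h⟩
        exact ⟨by omega, by omega, h⟩
    · intro a hav
      rw [hgN]
      simp only [dif_pos (show a < v + 1 by omega), dif_pos (show a < n by omega)]
      rfl
    · intro k hkv
      simp only [dif_pos hkv, dif_pos (show k < n by omega)]
      rw [hcN]
      simp only [dif_pos (show k < n by omega)]
      rfl
  have hcv : ∀ v : Fin n, groupColoring A G γ v = cN v.1 := by
    intro v
    rw [hcN]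
    simp only [dif_pos v.isLt]
  constructor
  · intro u v huv
    rw [hcv u, hcv v]
    have hne : u.1 ≠ v.1 := by
      intro h
      exact G.irrefl (by rwa [show u = v from Fin.ext h] at huv)
    rcases lt_or_gt_of_ne hne with h | h
    · exact proper_lt hsym hind hdeg hrec u.1 v.1 h v.isLt ⟨u.isLt, v.isLt, huv⟩
    · exact (proper_lt hsym hind hdeg hrec v.1 u.1 h u.isLt
        ⟨v.isLt, u.isLt, huv.symm⟩).symm
  · intro v
    rw [hcv v]
    exact bounds_all hsym hind hdeg hrec v.1 v.isLt
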